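/- Let m ≥ 1 and let Y be a (1+m)×(1+m) real symmetric positive semidefinite matrix with rank(Y) = m. Let u ∈ ℝ^{1+m} be a nonzero vector with Y u = 0 and first component u₁ = 1. Then for every (1+m)×(1+m) real symmetric positive semidefinite matrix X with X₁₁ = 1 and ⟨X, Y⟩ = 0, one has X = u uᵀ; in particular such an X is unique and has rank 1. -/

import Mathlib

open Matrix

private lemma trace_transpose_mul_self_eq_zero {n : Type*} [Fintype n] {A : Matrix n n ℝ}
    (h : trace (Aᵀ * A) = 0) : A = 0 := by
  have hsum : ∑ j, ∑ i, A i j * A i j = 0 := by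
    simpa [Matrix.trace, Matrix.mul_apply, Matrix.diag] using h
  ext i j
  have h1 := (Finset.sum_eq_zero_iff_of_nonneg (fun j _ =>
    Finset.sum_nonneg (fun i _ => mul_self_nonneg (A i j)))).mp hsum j (Finset.mem_univ j)
  have h2 := (Finset.sum_eq_zero_iff_of_nonneg (fun i _ =>
    mul_self_nonneg (A i j))).mp h1 i (Finset.mem_univ i)
  simpa using mul_self_eq_zero.mp h2

open scoped MatrixOrder in
private lemma exists_sqrt_aux {n : Type*} [Fintype n] [DecidableEq n] {A : Matrix n n ℝ}
    (hA : A.PosSemidef) : ∃ S : Matrix n n ℝ, S * S = A ∧ Sᵀ = S :=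
  ⟨CFC.sqrt A, CFC.sqrt_mul_sqrt_self A hA.nonneg, (CFC.sqrt_nonneg A).posSemidef.isHermitian.eq⟩

/-- uniqueness of the primal moment matrix.  If `Y ⪰ 0` has size `1+m`,
rank `m`, and `u ≠ 0` with `Y u = 0` and first component `u₁ = 1`, then every PSD
matrix `X` with `X₁₁ = 1` and `⟨X, Y⟩ = 0` equals `u uᵀ`; in particular it is unique
and has rank 1. -/
theorem primal_moment_matrix_unique {m : ℕ} (hm : 1 ≤ m)
    (Y : Matrix (Fin (1 + m)) (Fin (1 + m)) ℝ)
    (hYpsd : Y.PosSemidef) (hYrank : Y.rank = m)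
    (u : Fin (1 + m) → ℝ) (hu : u ≠ 0) (hYu : Y.mulVec u = 0)
    (hu1 : u ⟨0, Nat.lt_of_lt_of_le Nat.one_pos (Nat.le_add_right 1 m)⟩ = 1) :
    ∀ X : Matrix (Fin (1 + m)) (Fin (1 + m)) ℝ,
      X.PosSemidef →
      X ⟨0, Nat.lt_of_lt_of_le Nat.one_pos (Nat.le_add_right 1 m)⟩
        ⟨0, Nat.lt_of_lt_of_le Nat.one_pos (Nat.le_add_right 1 m)⟩ = 1 →
      trace (Xᵀ * Y) = 0 →
      X = vecMulVec u u := by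
  intro X hXpsd hX00 htr
  set z : Fin (1 + m) := ⟨0, Nat.lt_of_lt_of_le Nat.one_pos (Nat.le_add_right 1 m)⟩ with hz
  -- square roots
  obtain ⟨S, hSS, hSsymm⟩ := exists_sqrt_aux hXpsd
  obtain ⟨T, hTT, hTsymm⟩ := exists_sqrt_aux hYpsd
  have hXsymm : Xᵀ = X := hXpsd.isHermitian.eq
  -- trace ((T*S)ᵀ * (T*S)) = trace (Xᵀ * Y) = 0
  have hTS : T * S = 0 := by
    apply trace_transpose_mul_self_eq_zero
    have : (T * S)ᵀ * (T * S) = S * (T * T) * S := by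
      rw [Matrix.transpose_mul, hSsymm, hTsymm]; simp only [Matrix.mul_assoc]
    rw [this, hTT]
    calc trace (S * Y * S) = trace (S * (Y * S)) := by rw [Matrix.mul_assoc]
      _ = trace ((Y * S) * S) := trace_mul_comm _ _
      _ = trace (Y * (S * S)) := by rw [Matrix.mul_assoc]
      _ = trace (Xᵀ * Y) := by rw [hSS, hXsymm, trace_mul_comm]
      _ = 0 := htr
  have hYX : Y * X = 0 := by
    rw [← hTT, ← hSS, Matrix.mul_assoc, ← Matrix.mul_assoc T S S, hTS,
      Matrix.zero_mul, Matrix.mul_zero]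
  -- kernel of Y is spanned by u
  have hfr : Module.finrank ℝ (LinearMap.ker Y.mulVecLin) = 1 := by
    have h := LinearMap.finrank_range_add_finrank_ker Y.mulVecLin
    rw [Module.finrank_fin_fun] at h
    have : Module.finrank ℝ (LinearMap.range Y.mulVecLin) = m := hYrank
    omega
  have huker : u ∈ LinearMap.ker Y.mulVecLin := by
    simpa [Matrix.mulVecLin] using hYu
  have hspan : LinearMap.ker Y.mulVecLin = Submodule.span ℝ {u} := by
    symm
    refine Submodule.eq_of_le_of_finrank_eq ?_ ?_
    · rw [Submodule.span_le, Set.singleton_subset_iff]; exact huker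
    · rw [finrank_span_singleton hu, hfr]
  -- each column of X is a multiple of u
  have hcol : ∀ j, ∀ i, X i j = X z j * u i := by
    intro j
    have hmem : (fun i => X i j) ∈ LinearMap.ker Y.mulVecLin := by
      rw [LinearMap.mem_ker]
      funext i
      have := congrFun (congrFun hYX i) j
      simpa [Matrix.mul_apply, Matrix.mulVecLin, Matrix.mulVec, dotProduct] using this
    rw [hspan, Submodule.mem_span_singleton] at hmem
    obtain ⟨c, hc⟩ := hmem
    have hcz : c = X z j := by
      have := congrFun hc z
      simp only [Pi.smul_apply, smul_eq_mul] at this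
      rw [← this, hu1, mul_one]
    intro i
    have := congrFun hc i
    simp only [Pi.smul_apply, smul_eq_mul] at this
    rw [← this, hcz]
  -- conclude
  ext i j
  have h1 : X i j = X z j * u i := hcol j i
  have h2 : X z j = X j z := by
    have := hXpsd.isHermitian.apply j z
    simpa using this
  have h3 : X j z = X z z * u j := hcol z j
  rw [h1, h2, h3, hX00, one_mul, vecMulVec_apply]
  ring
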